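/- Let d ≥ 1. There exists a constant C > 0, depending only on d, such that for every Schwartz function u : ℝ^d → ℝ one has ‖u‖_{L^∞(ℝ^d)} ≤ C ( ‖u‖_{L²(ℝ^d)} + ‖∇u‖_{L^∞(ℝ^d)} ). -/

import Mathlib

open MeasureTheory Real Metric
open scoped ENNReal

lemma pointwise_le_eLpNormEssSup {F : Type*} [NormedAddCommGroup F] {d : ℕ}
    (g : EuclideanSpace ℝ (Fin d) → F) (hg : Continuous g) (x : EuclideanSpace ℝ (Fin d)) :
    (‖g x‖₊ : ℝ≥0∞) ≤ eLpNormEssSup g volume := by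
  by_contra h
  push_neg at h
  have hopen : IsOpen {y | eLpNormEssSup g volume < (‖g y‖₊ : ℝ≥0∞)} :=
    isOpen_lt continuous_const (by fun_prop)
  have hpos : 0 < volume {y | eLpNormEssSup g volume < (‖g y‖₊ : ℝ≥0∞)} :=
    hopen.measure_pos volume ⟨x, h⟩
  have hae := enorm_ae_le_eLpNormEssSup g volume
  rw [MeasureTheory.ae_iff] at hae
  simp only [not_le] at hae
  exact absurd hae hpos.ne'

/-- **Low/high frequency interpolation inequality.** There is a constant `C = C(d)` such
that every Schwartz function `u : ℝ^d` satisfies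
`‖u‖_{L^∞} ≤ C (‖u‖_{L²} + ‖∇u‖_{L^∞})`. -/
theorem sup_interpolation (d : ℕ) (hd : 1 ≤ d) :
    ∃ C > 0, ∀ u : SchwartzMap (EuclideanSpace ℝ (Fin d)) ℝ,
      eLpNorm (⇑u) ⊤ volume ≤
        ENNReal.ofReal C *
          (eLpNorm (⇑u) 2 volume + eLpNorm (iteratedFDeriv ℝ 1 ⇑u) ⊤ volume) := by
  set E := EuclideanSpace ℝ (Fin d)
  set ω : ℝ≥0∞ := volume (ball (0 : E) 1) with hω
  have hω_pos : 0 < ω := measure_ball_pos volume 0 one_pos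
  have hω_lt : ω < ⊤ := measure_ball_lt_top
  set w : ℝ := ω.toReal with hw
  have hw_pos : 0 < w := ENNReal.toReal_pos hω_pos.ne' hω_lt.ne
  have hsw : 0 < Real.sqrt w := Real.sqrt_pos.2 hw_pos
  refine ⟨2 + 2 / Real.sqrt w, by positivity, fun u => ?_⟩
  set C : ℝ := 2 + 2 / Real.sqrt w with hC
  have hC_pos : 0 < C := by positivity
  by_cases hA_top : eLpNorm (⇑u) 2 volume = ⊤
  · rw [hA_top, top_add, ENNReal.mul_top (by simpa using hC_pos)]
    exact le_top
  by_cases hL_top : eLpNorm (iteratedFDeriv ℝ 1 ⇑u) ⊤ volume = ⊤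
  · rw [hL_top, add_top, ENNReal.mul_top (by simpa using hC_pos)]
    exact le_top
  set A : ℝ := (eLpNorm (⇑u) 2 volume).toReal with hA
  set L : ℝ := (eLpNorm (iteratedFDeriv ℝ 1 ⇑u) ⊤ volume).toReal with hL
  have hA0 : 0 ≤ A := ENNReal.toReal_nonneg
  have hL0 : 0 ≤ L := ENNReal.toReal_nonneg
  -- the derivative is bounded by L everywhere
  have hDcont : Continuous (iteratedFDeriv ℝ 1 ⇑u) :=
    (u.smooth ⊤).continuous_iteratedFDeriv (by exact_mod_cast le_top)
  have hderiv : ∀ z : E, ‖fderiv ℝ (⇑u) z‖ ≤ L := by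
    intro z
    have h1 : (‖iteratedFDeriv ℝ 1 (⇑u) z‖₊ : ℝ≥0∞) ≤ eLpNormEssSup (iteratedFDeriv ℝ 1 ⇑u) volume :=
      pointwise_le_eLpNormEssSup _ hDcont z
    have h2 : ‖iteratedFDeriv ℝ 1 (⇑u) z‖ ≤ L := by
      rw [hL, eLpNorm_exponent_top]
      have := ENNReal.toReal_mono (by rwa [← eLpNorm_exponent_top]) h1
      simpa using this
    calc ‖fderiv ℝ (⇑u) z‖ = ‖iteratedFDeriv ℝ 0 (fderiv ℝ (⇑u)) z‖ := by
            rw [norm_iteratedFDeriv_zero]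
      _ = ‖iteratedFDeriv ℝ 1 (⇑u) z‖ := norm_iteratedFDeriv_fderiv
      _ ≤ L := h2
  -- pointwise bound
  have hpt : ∀ x : E, ‖u x‖ ≤ C * (A + L) := by
    intro x
    by_cases hcase : ‖u x‖ ≤ 2 * (A + L)
    · calc ‖u x‖ ≤ 2 * (A + L) := hcase
        _ ≤ C * (A + L) := by
            apply mul_le_mul_of_nonneg_right _ (by positivity)
            rw [hC]; nlinarith [div_nonneg (by norm_num : (0:ℝ) ≤ 2) hsw.le]
    · push_neg at hcase
      set M : ℝ := ‖u x‖ with hM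
      have hM_pos : 0 < M := lt_of_le_of_lt (by positivity) hcase
      -- on ball x 1, |u y| ≥ M/2
      have hlow : ∀ y ∈ ball x 1, M / 2 ≤ ‖u y‖ := by
        intro y hy
        have hlip : ‖u y - u x‖ ≤ L * ‖y - x‖ :=
          convex_univ.norm_image_sub_le_of_norm_fderiv_le (fun z _ => u.differentiableAt)
            (fun z _ => hderiv z) (Set.mem_univ x) (Set.mem_univ y)
        have hyx : ‖y - x‖ ≤ 1 := by
          rw [← dist_eq_norm]; exact le_of_lt (mem_ball.1 hy)
        have h3 : ‖u y - u x‖ ≤ L := by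
          calc ‖u y - u x‖ ≤ L * ‖y - x‖ := hlip
            _ ≤ L * 1 := by nlinarith
            _ = L := mul_one L
        have h4 : L ≤ M / 2 := by nlinarith
        have := norm_sub_norm_le (u y) (u x)
        have h5 : ‖u y‖ ≥ ‖u x‖ - ‖u y - u x‖ := by
          have := norm_sub_norm_le (u x) (u y)
          have : ‖u x‖ - ‖u y‖ ≤ ‖u y - u x‖ := by
            rw [norm_sub_rev] at this; linarith [this]
          linarith
        linarith
      -- L² lower bound
      have hkey : (‖(M / 2 : ℝ)‖₊ : ℝ≥0∞) * ω ^ (1 / (2:ℝ)) ≤ eLpNorm (⇑u) 2 volume := by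
        have h6 : eLpNorm (fun _ : E => (M / 2 : ℝ)) 2 (volume.restrict (ball x 1)) ≤
            eLpNorm (⇑u) 2 (volume.restrict (ball x 1)) := by
          apply eLpNorm_mono_ae
          filter_upwards [ae_restrict_mem measurableSet_ball] with y hy
          show ‖(M / 2 : ℝ)‖ ≤ ‖u y‖
          calc ‖(M / 2 : ℝ)‖ = M / 2 := by
                rw [Real.norm_eq_abs, abs_of_pos (by positivity)]
            _ ≤ ‖u y‖ := hlow y hy
        have h7 : eLpNorm (fun _ : E => (M / 2 : ℝ)) 2 (volume.restrict (ball x 1)) =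
            (‖(M / 2 : ℝ)‖₊ : ℝ≥0∞) * ω ^ (1 / (2:ℝ)) := by
          rw [eLpNorm_const _ (by norm_num) (by
            simp [Measure.restrict_eq_zero, (measure_ball_pos volume x one_pos).ne']),
            Measure.restrict_apply_univ, Measure.addHaar_ball_center volume x 1]
          norm_num [hω, enorm_eq_nnnorm]
        calc (‖(M / 2 : ℝ)‖₊ : ℝ≥0∞) * ω ^ (1 / (2:ℝ)) = _ := h7.symm
          _ ≤ eLpNorm (⇑u) 2 (volume.restrict (ball x 1)) := h6
          _ ≤ eLpNorm (⇑u) 2 volume := eLpNorm_restrict_le _ _ _ _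
      -- take toReal
      have h8 : (M / 2) * w ^ (1 / (2:ℝ)) ≤ A := by
        have := ENNReal.toReal_mono hA_top hkey
        rw [ENNReal.toReal_mul, ← ENNReal.toReal_rpow, ENNReal.coe_toReal, coe_nnnorm,
          Real.norm_eq_abs, abs_of_pos (by positivity : (0:ℝ) < M / 2)] at this
        exact this
      have h9 : w ^ (1 / (2:ℝ)) = Real.sqrt w := by
        rw [Real.sqrt_eq_rpow]
      rw [h9] at h8
      have h10 : M ≤ 2 / Real.sqrt w * A := by
        rw [div_mul_eq_mul_div, le_div_iff₀ hsw]
        nlinarith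
      calc M ≤ 2 / Real.sqrt w * A := h10
        _ ≤ C * (A + L) := by
            rw [hC]
            nlinarith [div_nonneg (by norm_num : (0:ℝ) ≤ 2) hsw.le]
  -- conclude
  have hfin : eLpNorm (⇑u) ⊤ volume ≤ ENNReal.ofReal (C * (A + L)) := by
    rw [eLpNorm_exponent_top]
    exact eLpNormEssSup_le_of_ae_bound (Filter.Eventually.of_forall hpt)
  refine hfin.trans ?_
  rw [ENNReal.ofReal_mul hC_pos.le]
  apply mul_le_mul_right 
  calc ENNReal.ofReal (A + L) ≤ ENNReal.ofReal A + ENNReal.ofReal L := ENNReal.ofReal_add_le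
    _ = eLpNorm (⇑u) 2 volume + eLpNorm (iteratedFDeriv ℝ 1 ⇑u) ⊤ volume := by
        rw [hA, hL, ENNReal.ofReal_toReal hA_top, ENNReal.ofReal_toReal hL_top]
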